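/- arXiv:math/0411371 — 3 statements merged into one kernel-verified Lean document; each statement's English description precedes it below -/
import Mathlib

section
/- Let H be a Hilbert space and S an isometry on H. Then there exist a Hilbert space Ĥ containing H as a closed subspace (via an isometric embedding) and a unitary operator Ŝ on Ĥ such that Ŝ restricted to H equals S, and the union ⋃_{n≥0} Ŝ⁻ⁿ(H) is dense in Ĥ. Moreover the pair (Ĥ, Ŝ) is unique up to an intertwining unitary isomorphism fixing H. -/
set_option synthInstance.maxHeartbeats 1000000
set_option maxHeartbeats 1000000

/-- A unitary dilation of an isometry `S` on a Hilbert space `H`: a Hilbert space `Ĥ`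
containing `H` (via the isometric embedding `J`), and a unitary `Ŝ` on `Ĥ` restricting to `S`
on `H`, such that `⋃_{n ≥ 0} Ŝ⁻ⁿ(H)` is dense in `Ĥ`. -/
structure UnitaryDilation (H : Type) [NormedAddCommGroup H] [InnerProductSpace ℂ H]
    [CompleteSpace H] (S : H →ₗᵢ[ℂ] H) where
  carrier : Type
  [grp : NormedAddCommGroup carrier]
  [ips : InnerProductSpace ℂ carrier]
  [cpl : CompleteSpace carrier]
  J : H →ₗᵢ[ℂ] carrier
  Shat : carrier ≃ₗᵢ[ℂ] carrier
  restricts : ∀ v : H, Shat (J v) = J (S v)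
  minimal : Dense (⋃ n : ℕ, (⇑Shat.symm)^[n] '' Set.range J)

attribute [instance] UnitaryDilation.grp UnitaryDilation.ips UnitaryDilation.cpl


noncomputable section

open UniformSpace Module

namespace UDProof

variable {H : Type} [NormedAddCommGroup H] [InnerProductSpace ℂ H]

lemma norm_iterate (S : H →ₗᵢ[ℂ] H) (n : ℕ) (x : H) : ‖(⇑S)^[n] x‖ = ‖x‖ := by
  induction n with
  | zero => simp
  | succ n ih => rw [Function.iterate_succ_apply', S.norm_map, ih]

lemma inner_iterate (S : H →ₗᵢ[ℂ] H) (n : ℕ) (x y : H) :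
    (inner ℂ ((⇑S)^[n] x) ((⇑S)^[n] y) : ℂ) = inner ℂ x y := by
  induction n with
  | zero => simp
  | succ n ih => rw [Function.iterate_succ_apply', Function.iterate_succ_apply',
      S.inner_map_map, ih]

/-- transition maps of the directed system -/
def tr (S : H →ₗᵢ[ℂ] H) (i j : ℕ) (_ : i ≤ j) : H →ₗ[ℂ] H := S.toLinearMap ^ (j - i)

lemma tr_apply (S : H →ₗᵢ[ℂ] H) (i j : ℕ) (h : i ≤ j) (x : H) :
    tr S i j h x = (⇑S)^[j - i] x := by
  rw [tr, Module.End.pow_apply]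
  induction (j - i) with
  | zero => rfl
  | succ n ih => rw [Function.iterate_succ_apply', Function.iterate_succ_apply', ih,
      LinearIsometry.coe_toLinearMap]

instance trDS (S : H →ₗᵢ[ℂ] H) : DirectedSystem (fun _ : ℕ => H) (fun i j h => tr S i j h) where
  map_self i x := by simp [tr]
  map_map {k j i} hij hjk x := by
    simp only [tr, ← Module.End.mul_apply, ← pow_add]
    congr 2
    omega

/-- The algebraic direct limit `H → H → ⋯` along `S`. -/
abbrev Q (S : H →ₗᵢ[ℂ] H) : Type := Module.DirectLimit (fun _ : ℕ => H) (tr S)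

def qof (S : H →ₗᵢ[ℂ] H) (n : ℕ) : H →ₗ[ℂ] Q S :=
  Module.DirectLimit.of ℂ ℕ (fun _ : ℕ => H) (tr S) n

lemma qof_eq_of_le (S : H →ₗᵢ[ℂ] H) {n k : ℕ} (h : n ≤ k) (v : H) :
    qof S k ((⇑S)^[k - n] v) = qof S n v := by
  have := Module.DirectLimit.of_f (R := ℂ) (ι := ℕ) (G := fun _ : ℕ => H) (f := tr S)
    (i := n) (j := k) (hij := h) (x := v)
  rwa [tr_apply] at this

lemma qof_succ (S : H →ₗᵢ[ℂ] H) (n : ℕ) (v : H) : qof S (n + 1) (S v) = qof S n v := by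
  have := qof_eq_of_le S (Nat.le_succ n) v
  simpa using this

lemma qof_injective (S : H →ₗᵢ[ℂ] H) (n : ℕ) : Function.Injective (qof S n) := by
  intro v w h
  have h0 : qof S n (v - w) = 0 := by rw [map_sub, h, sub_self]
  obtain ⟨j, hij, hj⟩ := Module.DirectLimit.of.zero_exact h0
  rw [tr_apply] at hj
  have h1 : (⇑S)^[j - n] (v - w) = (⇑S)^[j - n] 0 := by simpa using hj
  have h2 : Function.Injective ((⇑S)^[j - n]) := S.injective.iterate _
  have := h2 h1
  simpa [sub_eq_zero] using this

lemma eq_at_level (S : H →ₗᵢ[ℂ] H) {n m : ℕ} {v w : H} (h : qof S n v = qof S m w)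
    (k : ℕ) (hn : n ≤ k) (hm : m ≤ k) : (⇑S)^[k - n] v = (⇑S)^[k - m] w := by
  apply qof_injective S k
  rw [qof_eq_of_le S hn v, qof_eq_of_le S hm w, h]

lemma exists_rep (S : H →ₗᵢ[ℂ] H) (x : Q S) : ∃ n v, x = qof S n v := by
  obtain ⟨n, v, h⟩ := Module.DirectLimit.exists_of x
  exact ⟨n, v, h.symm⟩

lemma exists_rep₂ (S : H →ₗᵢ[ℂ] H) (x y : Q S) :
    ∃ n v w, x = qof S n v ∧ y = qof S n w := by
  obtain ⟨a, v, rfl⟩ := exists_rep S x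
  obtain ⟨b, w, rfl⟩ := exists_rep S y
  exact ⟨max a b, (⇑S)^[max a b - a] v, (⇑S)^[max a b - b] w,
    (qof_eq_of_le S (le_max_left a b) v).symm, (qof_eq_of_le S (le_max_right a b) w).symm⟩

lemma exists_rep₃ (S : H →ₗᵢ[ℂ] H) (x y z : Q S) :
    ∃ n u v w, x = qof S n u ∧ y = qof S n v ∧ z = qof S n w := by
  obtain ⟨a, u, rfl⟩ := exists_rep S x
  obtain ⟨b, v, rfl⟩ := exists_rep S y
  obtain ⟨c, w, rfl⟩ := exists_rep S z
  refine ⟨max (max a b) c, (⇑S)^[max (max a b) c - a] u, (⇑S)^[max (max a b) c - b] v,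
    (⇑S)^[max (max a b) c - c] w, ?_, ?_, ?_⟩ <;>
    rw [qof_eq_of_le] <;> omega

def ddeg (S : H →ₗᵢ[ℂ] H) (x : Q S) : ℕ := (Module.DirectLimit.exists_of x).choose

def drep (S : H →ₗᵢ[ℂ] H) (x : Q S) : H :=
  (Module.DirectLimit.exists_of x).choose_spec.choose

lemma qof_drep (S : H →ₗᵢ[ℂ] H) (x : Q S) : qof S (ddeg S x) (drep S x) = x :=
  (Module.DirectLimit.exists_of x).choose_spec.choose_spec

def innerQ (S : H →ₗᵢ[ℂ] H) (x y : Q S) : ℂ :=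
  inner ℂ ((⇑S)^[max (ddeg S x) (ddeg S y) - ddeg S x] (drep S x))
        ((⇑S)^[max (ddeg S x) (ddeg S y) - ddeg S y] (drep S y))

lemma innerQ_qof (S : H →ₗᵢ[ℂ] H) (n : ℕ) (v w : H) :
    innerQ S (qof S n v) (qof S n w) = (inner ℂ v w : ℂ) := by
  set x := qof S n v with hx
  set y := qof S n w with hy
  set a := ddeg S x
  set b := ddeg S y
  set c := max a b with hc
  set K := max c n with hK
  have hac : a ≤ c := le_max_left a b
  have hbc : b ≤ c := le_max_right a b
  have hcK : c ≤ K := le_max_left c n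
  have hnK : n ≤ K := le_max_right c n
  have h1 : (⇑S)^[K - a] (drep S x) = (⇑S)^[K - n] v :=
    eq_at_level S (by rw [qof_drep, hx]) K (hac.trans hcK) hnK
  have h2 : (⇑S)^[K - b] (drep S y) = (⇑S)^[K - n] w :=
    eq_at_level S (by rw [qof_drep, hy]) K (hbc.trans hcK) hnK
  have e1 : (K - c) + (c - a) = K - a := by omega
  have e2 : (K - c) + (c - b) = K - b := by omega
  calc innerQ S x y
      = inner ℂ ((⇑S)^[c - a] (drep S x)) ((⇑S)^[c - b] (drep S y)) := rfl
    _ = inner ℂ ((⇑S)^[K - c] ((⇑S)^[c - a] (drep S x)))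
          ((⇑S)^[K - c] ((⇑S)^[c - b] (drep S y))) := (inner_iterate S _ _ _).symm
    _ = inner ℂ ((⇑S)^[K - a] (drep S x)) ((⇑S)^[K - b] (drep S y)) := by
          rw [← Function.iterate_add_apply, ← Function.iterate_add_apply, e1, e2]
    _ = inner ℂ ((⇑S)^[K - n] v) ((⇑S)^[K - n] w) := by rw [h1, h2]
    _ = inner ℂ v w := inner_iterate S _ _ _

def coreQ (S : H →ₗᵢ[ℂ] H) : InnerProductSpace.Core ℂ (Q S) where
  inner := innerQ S
  conj_inner_symm x y := by
    obtain ⟨n, v, w, rfl, rfl⟩ := exists_rep₂ S x y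
    simpa [innerQ_qof] using inner_conj_symm (𝕜 := ℂ) (E := H) w v
  re_inner_nonneg x := by
    obtain ⟨n, v, rfl⟩ := exists_rep S x
    show 0 ≤ RCLike.re (innerQ S (qof S n v) (qof S n v))
    rw [innerQ_qof]
    exact inner_self_nonneg
  add_left x y z := by
    obtain ⟨n, u, v, w, rfl, rfl, rfl⟩ := exists_rep₃ S x y z
    show innerQ S (qof S n u + qof S n v) (qof S n w)
      = innerQ S (qof S n u) (qof S n w) + innerQ S (qof S n v) (qof S n w)
    rw [← map_add, innerQ_qof, innerQ_qof, innerQ_qof]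
    exact inner_add_left u v w
  smul_left x y r := by
    obtain ⟨n, v, w, rfl, rfl⟩ := exists_rep₂ S x y
    show innerQ S (r • qof S n v) (qof S n w)
      = (starRingEnd ℂ) r * innerQ S (qof S n v) (qof S n w)
    rw [← map_smul, innerQ_qof, innerQ_qof]
    exact inner_smul_left v w r
  definite x h := by
    obtain ⟨n, v, rfl⟩ := exists_rep S x
    have h' : innerQ S (qof S n v) (qof S n v) = 0 := h
    rw [innerQ_qof] at h'
    rw [inner_self_eq_zero.mp h', map_zero]

instance (S : H →ₗᵢ[ℂ] H) : NormedAddCommGroup (Q S) :=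
  @InnerProductSpace.Core.toNormedAddCommGroup ℂ (Q S) _ _ _ (coreQ S)

instance (S : H →ₗᵢ[ℂ] H) : InnerProductSpace ℂ (Q S) := InnerProductSpace.ofCore (coreQ S).toCore

lemma inner_qof (S : H →ₗᵢ[ℂ] H) (n : ℕ) (v w : H) :
    (inner ℂ (qof S n v) (qof S n w) : ℂ) = inner ℂ v w := innerQ_qof S n v w

lemma norm_qof (S : H →ₗᵢ[ℂ] H) (n : ℕ) (v : H) : ‖qof S n v‖ = ‖v‖ := by
  rw [@norm_eq_sqrt_re_inner ℂ, @norm_eq_sqrt_re_inner ℂ H, inner_qof]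

def qofₗᵢ (S : H →ₗᵢ[ℂ] H) (n : ℕ) : H →ₗᵢ[ℂ] Q S :=
  { toLinearMap := qof S n, norm_map' := norm_qof S n }
/-! ### The shift on `Q S` -/

def σQ (S : H →ₗᵢ[ℂ] H) : Q S →ₗ[ℂ] Q S :=
  Module.DirectLimit.map (fun _ : ℕ => S.toLinearMap) (fun i j h => by
    ext x
    simp only [LinearMap.coe_comp, Function.comp_apply, LinearIsometry.coe_toLinearMap,
      tr_apply]
    rw [← Function.iterate_succ_apply (⇑S) (j-i) x, Function.iterate_succ_apply'])

lemma σQ_qof (S : H →ₗᵢ[ℂ] H) (n : ℕ) (v : H) : σQ S (qof S n v) = qof S n (S v) :=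
  Module.DirectLimit.map_apply_of _ _ _

def τQ (S : H →ₗᵢ[ℂ] H) : Q S →ₗ[ℂ] Q S :=
  Module.DirectLimit.lift ℂ ℕ (fun _ : ℕ => H) (tr S) (fun n => qof S (n + 1)) (by
    intro i j hij x
    rw [tr_apply]
    have := qof_eq_of_le S (k := j + 1) (n := i + 1) (by omega) x
    rwa [Nat.succ_sub_succ] at this)

lemma τQ_qof (S : H →ₗᵢ[ℂ] H) (n : ℕ) (v : H) : τQ S (qof S n v) = qof S (n + 1) v :=
  Module.DirectLimit.lift_of _ _ _

def σe (S : H →ₗᵢ[ℂ] H) : Q S ≃ₗᵢ[ℂ] Q S :=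
  { toLinearEquiv := LinearEquiv.ofLinear (σQ S) (τQ S)
      (LinearMap.ext fun x => by
        refine Module.DirectLimit.induction_on x (fun n v => ?_)
        show σQ S (τQ S (qof S n v)) = qof S n v
        rw [τQ_qof, σQ_qof, qof_succ])
      (LinearMap.ext fun x => by
        refine Module.DirectLimit.induction_on x (fun n v => ?_)
        show τQ S (σQ S (qof S n v)) = qof S n v
        rw [σQ_qof, τQ_qof, qof_succ])
    norm_map' := fun x => by
      refine Module.DirectLimit.induction_on x (fun n v => ?_)
      show ‖σQ S (qof S n v)‖ = ‖qof S n v‖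
      rw [σQ_qof, norm_qof, norm_qof, S.norm_map] }

lemma σe_apply (S : H →ₗᵢ[ℂ] H) (x : Q S) : σe S x = σQ S x := rfl

lemma σe_symm_apply (S : H →ₗᵢ[ℂ] H) (x : Q S) : (σe S).symm x = τQ S x := rfl

/-! ### Extension of linear isometries to the completion -/

section Extend

variable {E F : Type*} [NormedAddCommGroup E] [NormedSpace ℂ E]
  [NormedAddCommGroup F] [NormedSpace ℂ F] [CompleteSpace F]

def completionExtend (f : E →ₗᵢ[ℂ] F) : Completion E →ₗᵢ[ℂ] F where
  toLinearMap :=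
    { toFun := Completion.extension ⇑f
      map_add' := fun a b => Completion.induction_on₂ a b
        (isClosed_eq (Completion.continuous_extension.comp continuous_add)
          ((Completion.continuous_extension.comp continuous_fst).add
            (Completion.continuous_extension.comp continuous_snd)))
        (fun a b => by
          rw [← Completion.coe_add,
            Completion.extension_coe f.isometry.uniformContinuous,
            Completion.extension_coe f.isometry.uniformContinuous,
            Completion.extension_coe f.isometry.uniformContinuous, map_add])
      map_smul' := fun c a => Completion.induction_on a
        (isClosed_eq (Completion.continuous_extension.comp (continuous_const_smul c))
          ((Completion.continuous_extension).const_smul c))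
        (fun a => by
          show Completion.extension ⇑f (c • (↑a : Completion E))
            = (RingHom.id ℂ) c • Completion.extension ⇑f (↑a : Completion E)
          rw [← Completion.coe_smul,
            Completion.extension_coe f.isometry.uniformContinuous,
            Completion.extension_coe f.isometry.uniformContinuous, map_smul]
          rfl) }
  norm_map' := fun a => Completion.induction_on a
    (isClosed_eq (continuous_norm.comp Completion.continuous_extension) continuous_norm)
    (fun a => by
      show ‖Completion.extension ⇑f ↑a‖ = _
      rw [Completion.extension_coe f.isometry.uniformContinuous, f.norm_map,
        Completion.norm_coe])

lemma completionExtend_coe (f : E →ₗᵢ[ℂ] F) (x : E) : completionExtend f ↑x = f x :=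
  Completion.extension_coe f.isometry.uniformContinuous x

end Extend
/-! ### Canonical unitary on the completion -/

def σc (S : H →ₗᵢ[ℂ] H) : Completion (Q S) →ₗᵢ[ℂ] Completion (Q S) :=
  completionExtend (Completion.toComplₗᵢ.comp (σe S).toLinearIsometry)

def τc (S : H →ₗᵢ[ℂ] H) : Completion (Q S) →ₗᵢ[ℂ] Completion (Q S) :=
  completionExtend (Completion.toComplₗᵢ.comp (σe S).symm.toLinearIsometry)

lemma σc_coe (S : H →ₗᵢ[ℂ] H) (x : Q S) : σc S ↑x = ↑(σQ S x) := completionExtend_coe _ x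

lemma τc_coe (S : H →ₗᵢ[ℂ] H) (x : Q S) : τc S ↑x = ↑(τQ S x) := completionExtend_coe _ x

def ShatCan (S : H →ₗᵢ[ℂ] H) : Completion (Q S) ≃ₗᵢ[ℂ] Completion (Q S) where
  toLinearEquiv := LinearEquiv.ofLinear (σc S).toLinearMap (τc S).toLinearMap
    (LinearMap.ext fun x => Completion.induction_on x
      (isClosed_eq ((σc S).continuous.comp (τc S).continuous) continuous_id)
      (fun q => by
        show σc S (τc S ↑q) = ↑q
        rw [τc_coe, σc_coe]
        exact congrArg _ ((σe S).apply_symm_apply q)))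
    (LinearMap.ext fun x => Completion.induction_on x
      (isClosed_eq ((τc S).continuous.comp (σc S).continuous) continuous_id)
      (fun q => by
        show τc S (σc S ↑q) = ↑q
        rw [σc_coe, τc_coe]
        exact congrArg _ ((σe S).symm_apply_apply q)))
  norm_map' := (σc S).norm_map

lemma shatCan_coe (S : H →ₗᵢ[ℂ] H) (x : Completion (Q S)) : ShatCan S x = σc S x := rfl

lemma shatCan_symm_coe (S : H →ₗᵢ[ℂ] H) (x : Completion (Q S)) :
    (ShatCan S).symm x = τc S x := rfl

lemma shatCan_symm_iter (S : H →ₗᵢ[ℂ] H) (k : ℕ) (w : H) :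
    (⇑(ShatCan S).symm)^[k] (↑(qof S 0 w) : Completion (Q S)) = ↑(qof S k w) := by
  induction k with
  | zero => rfl
  | succ k ih =>
    rw [Function.iterate_succ_apply', ih, shatCan_symm_coe, τc_coe, τQ_qof]

/-! ### Comparison with an arbitrary dilation -/

section Dilation

variable [CompleteSpace H] {S : H →ₗᵢ[ℂ] H} (D : UnitaryDilation H S)

lemma shat_iter_J (n : ℕ) (v : H) : (⇑D.Shat)^[n] (D.J v) = D.J ((⇑S)^[n] v) := by
  induction n with
  | zero => rfl
  | succ n ih =>
    rw [Function.iterate_succ_apply', Function.iterate_succ_apply', ih, D.restricts]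

lemma shat_symm_iter_norm (n : ℕ) (x : D.carrier) : ‖(⇑D.Shat.symm)^[n] x‖ = ‖x‖ := by
  induction n with
  | zero => rfl
  | succ n ih => rw [Function.iterate_succ_apply', D.Shat.symm.norm_map, ih]

lemma shat_symm_iter_shat (n : ℕ) (x : D.carrier) :
    (⇑D.Shat.symm)^[n] (D.Shat x) = D.Shat ((⇑D.Shat.symm)^[n] x) := by
  induction n generalizing x with
  | zero => rfl
  | succ n ih =>
    rw [Function.iterate_succ_apply, Function.iterate_succ_apply,
      D.Shat.symm_apply_apply, ← ih, D.Shat.apply_symm_apply]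

def TD : D.carrier →ₗ[ℂ] D.carrier := D.Shat.symm.toLinearEquiv.toLinearMap

def glin (n : ℕ) : H →ₗ[ℂ] D.carrier := ((TD D) ^ n) ∘ₗ D.J.toLinearMap

lemma glin_apply (n : ℕ) (v : H) : glin D n v = (⇑D.Shat.symm)^[n] (D.J v) := by
  simp only [glin, LinearMap.coe_comp, Function.comp_apply, Module.End.pow_apply]
  rfl

def φD : Q S →ₗ[ℂ] D.carrier :=
  Module.DirectLimit.lift ℂ ℕ (fun _ : ℕ => H) (tr S) (glin D) (by
    intro i j hij x
    obtain ⟨k, rfl⟩ : ∃ k, j = i + k := ⟨j - i, by omega⟩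
    rw [glin_apply, glin_apply, tr_apply, Nat.add_sub_cancel_left, ← shat_iter_J D k x,
      Function.iterate_add_apply]
    congr 1
    exact Function.LeftInverse.iterate (fun y => D.Shat.symm_apply_apply y) k _)

lemma φD_qof (n : ℕ) (v : H) : φD D (qof S n v) = (⇑D.Shat.symm)^[n] (D.J v) :=
  (Module.DirectLimit.lift_of _ _ _).trans (glin_apply D n v)

def φDₗᵢ : Q S →ₗᵢ[ℂ] D.carrier where
  toLinearMap := φD D
  norm_map' x := by
    refine Module.DirectLimit.induction_on x fun n v => ?_
    show ‖φD D (qof S n v)‖ = ‖qof S n v‖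
    rw [φD_qof, shat_symm_iter_norm, D.J.norm_map, norm_qof]

def ΦD : Completion (Q S) →ₗᵢ[ℂ] D.carrier := completionExtend (φDₗᵢ D)

lemma ΦD_coe (x : Q S) : ΦD D ↑x = φD D x := completionExtend_coe _ x

lemma ΦD_surjective : Function.Surjective (ΦD D) := by
  have hclosed : IsClosed (Set.range (ΦD D)) :=
    ((ΦD D).isometry.isClosedEmbedding).isClosed_range
  have hsub : (⋃ n : ℕ, (⇑D.Shat.symm)^[n] '' Set.range D.J) ⊆ Set.range (ΦD D) := by
    rintro x hx
    simp only [Set.mem_iUnion, Set.mem_image, Set.mem_range] at hx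
    obtain ⟨n, y, ⟨v, rfl⟩, rfl⟩ := hx
    exact ⟨↑(qof S n v), by rw [ΦD_coe, φD_qof]⟩
  have hdense : Dense (Set.range (ΦD D)) := D.minimal.mono hsub
  have : Set.range (ΦD D) = Set.univ := by
    rw [← hclosed.closure_eq]
    exact hdense.closure_eq
  exact Set.range_eq_univ.mp this

lemma ΦD_σc (x : Completion (Q S)) : ΦD D (σc S x) = D.Shat (ΦD D x) := by
  refine Completion.induction_on x
    (isClosed_eq ((ΦD D).continuous.comp (σc S).continuous)
      (D.Shat.continuous.comp (ΦD D).continuous)) fun q => ?_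
  refine Module.DirectLimit.induction_on q fun n v => ?_
  show ΦD D (σc S ↑(qof S n v)) = D.Shat (ΦD D ↑(qof S n v))
  rw [σc_coe, σQ_qof, ΦD_coe, ΦD_coe, φD_qof, φD_qof, ← D.restricts,
    shat_symm_iter_shat]

def ΦE : Completion (Q S) ≃ₗᵢ[ℂ] D.carrier :=
  LinearIsometryEquiv.ofSurjective (ΦD D) (ΦD_surjective D)

lemma ΦE_coe (x : Completion (Q S)) : ΦE D x = ΦD D x := rfl

lemma ΦE_J (v : H) : ΦE D (↑(qof S 0 v)) = D.J v := by
  rw [ΦE_coe, ΦD_coe, φD_qof]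
  rfl

end Dilation

/-! ### The canonical dilation -/

variable [CompleteSpace H]

def JCan (S : H →ₗᵢ[ℂ] H) : H →ₗᵢ[ℂ] Completion (Q S) :=
  Completion.toComplₗᵢ.comp (qofₗᵢ S 0)

def DCan (S : H →ₗᵢ[ℂ] H) : UnitaryDilation H S where
  carrier := Completion (Q S)
  grp := inferInstance
  ips := inferInstance
  cpl := inferInstance
  J := JCan S
  Shat := ShatCan S
  restricts v := by
    show ShatCan S ↑(qof S 0 v) = (↑(qof S 0 (S v)) : Completion (Q S))
    rw [shatCan_coe, σc_coe, σQ_qof]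
  minimal := by
    have hsub : Set.range ((↑) : Q S → Completion (Q S)) ⊆
        ⋃ n : ℕ, (⇑(ShatCan S).symm)^[n] '' Set.range (JCan S) := by
      rintro _ ⟨q, rfl⟩
      refine Module.DirectLimit.induction_on q fun n v => ?_
      refine Set.mem_iUnion.mpr ⟨n, ?_⟩
      exact ⟨↑(qof S 0 v), ⟨v, rfl⟩, shatCan_symm_iter S n v⟩
    exact Completion.denseRange_coe.mono hsub

end UDProof

open UDProof in
/-- Theorem 4.6 (i): every isometry `S` on a Hilbert space `H` has a minimal unitary dilation
`(Ĥ, Ŝ)`, with `Ŝ|_H = S` and `⋃_{n ≥ 0} Ŝ⁻ⁿ(H)` dense in `Ĥ`; it is unique up to an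
intertwining unitary isomorphism fixing `H`. -/
theorem exists_unique_minimal_unitary_dilation
    (H : Type) [NormedAddCommGroup H] [InnerProductSpace ℂ H] [CompleteSpace H]
    (S : H →ₗᵢ[ℂ] H) :
    Nonempty (UnitaryDilation H S) ∧
      ∀ D₁ D₂ : UnitaryDilation H S,
        ∃ W : D₁.carrier ≃ₗᵢ[ℂ] D₂.carrier,
          (∀ v : H, W (D₁.J v) = D₂.J v) ∧
          ∀ w : D₁.carrier, W (D₁.Shat w) = D₂.Shat (W w) := by
  constructor
  · exact ⟨DCan S⟩
  · intro D₁ D₂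
    refine ⟨(ΦE D₁).symm.trans (ΦE D₂), ?_, ?_⟩
    · intro v
      have h1 : (ΦE D₁).symm (D₁.J v) = ↑(qof S 0 v) :=
        ((ΦE D₁).symm_apply_eq).mpr (ΦE_J D₁ v).symm
      rw [LinearIsometryEquiv.trans_apply, h1, ΦE_J]
    · intro w
      set u := (ΦE D₁).symm w with hu
      have hw : ΦE D₁ u = w := (ΦE D₁).apply_symm_apply w
      have h3 : ΦE D₁ (σc S u) = D₁.Shat w := by
        rw [ΦE_coe, ΦD_σc]
        rw [← ΦE_coe, hw]
      have h4 : (ΦE D₁).symm (D₁.Shat w) = σc S u :=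
        ((ΦE D₁).symm_apply_eq).mpr h3.symm
      rw [LinearIsometryEquiv.trans_apply, LinearIsometryEquiv.trans_apply, h4, ← hu,
        ΦE_coe, ΦD_σc, ← ΦE_coe]
end
end

section
/- Let X be a measurable space and r : X → X an N-to-1 onto map with measurable inverse branches τ₁,…,τ_N : X → X (so r(τ_k(x)) = x for all x, the sets τ_k(X) are disjoint, and they cover X). Let W, h : X → [0,∞) be measurable functions satisfying Σ_{k=1}^N W(τ_k(x)) h(τ_k(x)) = h(x) for all x ∈ X. Then for every x ∈ X there exists a positive Borel measure P_x on Ω := ∏_{ℕ}{1,…,N} such that for every n and every bounded measurable function f on Ω depending only on the first n coordinates ω₁,…,ω_n, one has ∫_Ω f dP_x = Σ_{ω₁,…,ω_n ∈ {1,…,N}} W^{(n)}(τ_{ω_n}τ_{ω_{n-1}}⋯τ_{ω_1}(x)) · h(τ_{ω_n}τ_{ω_{n-1}}⋯τ_{ω_1}(x)) · f(ω₁,…,ω_n). -/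
open MeasureTheory

/-- `chainF τ σ x = τ_{σ(n-1)} (τ_{σ(n-2)} ( ⋯ (τ_{σ 0} x)))`, i.e. the composite inverse
branch `τ_{ω_n} τ_{ω_{n-1}} ⋯ τ_{ω_1}` applied to `x` (with `ω_k = σ (k-1)`). -/
def chainF {X : Type} {N n : ℕ} (τ : Fin N → X → X) (σ : Fin n → Fin N) (x : X) : X :=
  (List.ofFn σ).foldl (fun y k => τ k y) x

lemma chainF_snoc {X : Type} {N n : ℕ} (τ : Fin N → X → X) (σ : Fin n → Fin N) (k : Fin N)
    (x : X) : chainF τ (Fin.snoc σ k) x = τ k (chainF τ σ x) := by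
  have h1 : (fun i => (Fin.snoc σ k : Fin (n+1) → Fin N) (Fin.castSucc i)) = σ :=
    funext fun i => by simp
  unfold chainF
  rw [List.ofFn_succ', h1, Fin.snoc_last, List.concat_eq_append, List.foldl_append]
  rfl

namespace PathSpaceAux

variable {N : ℕ}

/-- extension weights, indexed by natural numbers (0 outside `[0,N)`). -/
noncomputable def wext (w : ∀ n, (Fin n → Fin N) → ℝ) (n : ℕ) (σ : Fin n → Fin N)
    (j : ℕ) : ℝ :=
  if hj : j < N then w (n + 1) (Fin.snoc σ ⟨j, hj⟩) else 0

/-- left endpoint of the cylinder interval. -/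
noncomputable def Lfun (w : ∀ n, (Fin n → Fin N) → ℝ) : ∀ n, (Fin n → Fin N) → ℝ
  | 0, _ => 0
  | (n + 1), σ => Lfun w n (Fin.init σ) +
      ∑ j ∈ Finset.range (σ (Fin.last n) : ℕ), wext w n (Fin.init σ) j

/-- the interval attached to a cylinder. -/
noncomputable def Ival (w : ∀ n, (Fin n → Fin N) → ℝ) (n : ℕ) (σ : Fin n → Fin N) : Set ℝ :=
  Set.Ico (Lfun w n σ) (Lfun w n σ + w n σ)

lemma Ico_disjoint_of_le {a b c d : ℝ} (hbc : b ≤ c) :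
    Disjoint (Set.Ico a b) (Set.Ico c d) := by
  apply Set.disjoint_left.mpr
  rintro t ⟨_, h2⟩ ⟨h3, _⟩
  linarith

lemma crossing (u : ℕ → ℝ) :
    ∀ (m : ℕ) (t : ℝ), 0 ≤ t → t < ∑ j ∈ Finset.range m, u j →
      ∃ k, k < m ∧ (∑ j ∈ Finset.range k, u j) ≤ t ∧
        t < ∑ j ∈ Finset.range (k + 1), u j := by
  intro m
  induction m with
  | zero => intro t h0 h1; simp only [Finset.range_zero, Finset.sum_empty] at h1; linarith
  | succ m ihm =>
    intro t h0 h1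
    by_cases hc : t < ∑ j ∈ Finset.range m, u j
    · obtain ⟨k, hk, h2, h3⟩ := ihm t h0 hc
      exact ⟨k, Nat.lt_succ_of_lt hk, h2, h3⟩
    · exact ⟨m, Nat.lt_succ_self m, le_of_not_gt hc, h1⟩

open Classical in
/-- the address of a point at level `n`. -/
noncomputable def addr (hN : 0 < N) (w : ∀ n, (Fin n → Fin N) → ℝ) (n : ℕ) (t : ℝ) :
    Fin n → Fin N :=
  if H : ∃ σ, t ∈ Ival w n σ then H.choose else fun _ => ⟨0, hN⟩

/-- the full digit sequence of a point. -/
noncomputable def gmap (hN : 0 < N) (w : ∀ n, (Fin n → Fin N) → ℝ) (t : ℝ) : ℕ → Fin N :=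
  fun m => addr hN w (m + 1) t (Fin.last m)

section

variable (w : ∀ n, (Fin n → Fin N) → ℝ)
variable (hw0 : ∀ n σ, 0 ≤ w n σ)
variable (hcons : ∀ n σ, ∑ k : Fin N, w (n + 1) (Fin.snoc σ k) = w n σ)

include hw0 hcons

lemma wext_nonneg (n : ℕ) (σ : Fin n → Fin N) (j : ℕ) : 0 ≤ wext w n σ j := by
  unfold wext
  split
  · exact hw0 _ _
  · exact le_refl 0

lemma wext_val (n : ℕ) (σ : Fin n → Fin N) (k : Fin N) :
    wext w n σ (k : ℕ) = w (n + 1) (Fin.snoc σ k) := by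
  unfold wext
  rw [dif_pos k.isLt]

lemma sum_wext (n : ℕ) (σ : Fin n → Fin N) :
    ∑ j ∈ Finset.range N, wext w n σ j = w n σ := by
  rw [Finset.sum_range fun j => wext w n σ j]
  calc ∑ j : Fin N, wext w n σ (j : ℕ)
      = ∑ j : Fin N, w (n + 1) (Fin.snoc σ j) :=
        Finset.sum_congr rfl fun j _ => wext_val w hw0 hcons n σ j
    _ = w n σ := hcons n σ

lemma sum_wext_le (n : ℕ) (σ : Fin n → Fin N) {m : ℕ} (hm : m ≤ N) :
    ∑ j ∈ Finset.range m, wext w n σ j ≤ w n σ := by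
  rw [← sum_wext w hw0 hcons n σ]
  exact Finset.sum_le_sum_of_subset_of_nonneg (Finset.range_subset_range.2 hm)
    fun j _ _ => wext_nonneg w hw0 hcons n σ j

lemma Lfun_snoc (n : ℕ) (σ : Fin n → Fin N) (k : Fin N) :
    Lfun w (n + 1) (Fin.snoc σ k) =
      Lfun w n σ + ∑ j ∈ Finset.range (k : ℕ), wext w n σ j := by
  simp only [Lfun, Fin.init_snoc, Fin.snoc_last]

lemma Ival_snoc_subset (n : ℕ) (σ : Fin n → Fin N) (k : Fin N) :
    Ival w (n + 1) (Fin.snoc σ k) ⊆ Ival w n σ := by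
  unfold Ival
  rw [Lfun_snoc w hw0 hcons]
  apply Set.Ico_subset_Ico
  · have : 0 ≤ ∑ j ∈ Finset.range (k : ℕ), wext w n σ j :=
      Finset.sum_nonneg fun j _ => wext_nonneg w hw0 hcons n σ j
    linarith
  · have h1 : (∑ j ∈ Finset.range (k : ℕ), wext w n σ j) + w (n + 1) (Fin.snoc σ k) =
        ∑ j ∈ Finset.range ((k : ℕ) + 1), wext w n σ j := by
      rw [Finset.sum_range_succ, wext_val w hw0 hcons]
    have h2 : ∑ j ∈ Finset.range ((k : ℕ) + 1), wext w n σ j ≤ w n σ :=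
      sum_wext_le w hw0 hcons n σ k.isLt
    linarith

lemma Ival_subset (n : ℕ) (σ : Fin n → Fin N) :
    Ival w n σ ⊆ Set.Ico (0 : ℝ) (w 0 fun i => i.elim0) := by
  induction n with
  | zero =>
    have hσ : σ = fun i => i.elim0 := Subsingleton.elim _ _
    subst hσ
    unfold Ival
    have h0 : Lfun w 0 (fun i : Fin 0 => i.elim0) = 0 := rfl
    rw [h0, zero_add]
  | succ n ih =>
    have hsub := Ival_snoc_subset w hw0 hcons n (Fin.init σ) (σ (Fin.last n))
    rw [Fin.snoc_init_self] at hsub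
    exact hsub.trans (ih (Fin.init σ))

lemma Ival_disjoint : ∀ (n : ℕ) (σ σ' : Fin n → Fin N), σ ≠ σ' →
    Disjoint (Ival w n σ) (Ival w n σ') := by
  intro n
  induction n with
  | zero => intro σ σ' hne; exact absurd (Subsingleton.elim σ σ') hne
  | succ n ih =>
    intro σ σ' hne
    rcases eq_or_ne (Fin.init σ) (Fin.init σ') with heq | hneq
    · -- same parent; different last entry
      have hk : σ (Fin.last n) ≠ σ' (Fin.last n) := by
        intro hkk
        apply hne
        rw [← Fin.snoc_init_self σ, ← Fin.snoc_init_self σ', heq, hkk]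
      have key : ∀ (τ : Fin n → Fin N) (k k' : Fin N), (k : ℕ) < (k' : ℕ) →
          Disjoint (Ival w (n + 1) (Fin.snoc τ k)) (Ival w (n + 1) (Fin.snoc τ k')) := by
        intro τ k k' hkk'
        unfold Ival
        rw [Lfun_snoc w hw0 hcons, Lfun_snoc w hw0 hcons]
        apply Ico_disjoint_of_le
        have h1 : (∑ j ∈ Finset.range (k : ℕ), wext w n τ j) + w (n + 1) (Fin.snoc τ k) =
            ∑ j ∈ Finset.range ((k : ℕ) + 1), wext w n τ j := by
          rw [Finset.sum_range_succ, wext_val w hw0 hcons]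
        have h2 : ∑ j ∈ Finset.range ((k : ℕ) + 1), wext w n τ j ≤
            ∑ j ∈ Finset.range (k' : ℕ), wext w n τ j :=
          Finset.sum_le_sum_of_subset_of_nonneg (Finset.range_subset_range.2 hkk')
            fun j _ _ => wext_nonneg w hw0 hcons n τ j
        linarith
      have hσ : σ = Fin.snoc (Fin.init σ) (σ (Fin.last n)) := (Fin.snoc_init_self σ).symm
      have hσ' : σ' = Fin.snoc (Fin.init σ') (σ' (Fin.last n)) := (Fin.snoc_init_self σ').symm
      rcases lt_or_gt_of_ne (fun hv => hk (Fin.val_injective hv)) with hlt | hgt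
      · rw [hσ, hσ', ← heq]; exact key _ _ _ hlt
      · rw [hσ, hσ', ← heq]; exact (key _ _ _ hgt).symm
    · refine Disjoint.mono ?_ ?_ (ih _ _ hneq)
      · have := Ival_snoc_subset w hw0 hcons n (Fin.init σ) (σ (Fin.last n))
        rwa [Fin.snoc_init_self] at this
      · have := Ival_snoc_subset w hw0 hcons n (Fin.init σ') (σ' (Fin.last n))
        rwa [Fin.snoc_init_self] at this

lemma Ival_cover : ∀ (n : ℕ), ∀ t ∈ Set.Ico (0 : ℝ) (w 0 fun i => i.elim0),
    ∃ σ : Fin n → Fin N, t ∈ Ival w n σ := by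
  intro n
  induction n with
  | zero =>
    intro t ht
    refine ⟨fun i => i.elim0, ?_⟩
    unfold Ival
    have h0 : Lfun w 0 (fun i : Fin 0 => i.elim0) = 0 := rfl
    rw [h0, zero_add]
    exact ht
  | succ n ih =>
    intro t ht
    obtain ⟨σ, h1, h2⟩ := ih t ht
    have hsum : t - Lfun w n σ < ∑ j ∈ Finset.range N, wext w n σ j := by
      rw [sum_wext w hw0 hcons]; linarith
    obtain ⟨k, hkN, hk1, hk2⟩ := crossing (wext w n σ) N
      (t - Lfun w n σ) (by linarith) hsum
    refine ⟨Fin.snoc σ ⟨k, hkN⟩, ?_⟩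
    unfold Ival
    rw [Lfun_snoc w hw0 hcons]
    have hv : ((⟨k, hkN⟩ : Fin N) : ℕ) = k := rfl
    rw [hv]
    constructor
    · linarith
    · have hvv := wext_val w hw0 hcons n σ (⟨k, hkN⟩ : Fin N)
      rw [hv] at hvv
      rw [← hvv]
      have hss : ∑ j ∈ Finset.range (k + 1), wext w n σ j =
          (∑ j ∈ Finset.range k, wext w n σ j) + wext w n σ k := Finset.sum_range_succ _ _
      linarith

variable (hN : 0 < N)

lemma addr_eq {n : ℕ} {t : ℝ} {σ : Fin n → Fin N} (hmem : t ∈ Ival w n σ) :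
    addr hN w n t = σ := by
  have H : ∃ σ', t ∈ Ival w n σ' := ⟨σ, hmem⟩
  rw [addr, dif_pos H]
  by_contra hne
  exact Set.disjoint_left.mp (Ival_disjoint w hw0 hcons n _ _ hne) H.choose_spec hmem

lemma addr_measurable (n : ℕ) : Measurable (addr hN w n) := by
  apply measurable_to_countable'
  intro σ
  have hset : addr hN w n ⁻¹' {σ} =
      Ival w n σ ∪
        (if σ = (fun _ => ⟨0, hN⟩) then (⋃ σ', Ival w n σ')ᶜ else (∅ : Set ℝ)) := by
    ext t
    simp only [Set.mem_preimage, Set.mem_singleton_iff, Set.mem_union]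
    constructor
    · intro ht
      by_cases H : ∃ σ', t ∈ Ival w n σ'
      · left
        have hch : addr hN w n t = H.choose := dif_pos H
        rw [← ht, hch]
        exact H.choose_spec
      · right
        have h1 : addr hN w n t = fun _ => ⟨0, hN⟩ := dif_neg H
        rw [← ht, h1, if_pos rfl]
        simp only [Set.mem_compl_iff, Set.mem_iUnion]
        exact H
    · rintro (ht | ht)
      · exact addr_eq w hw0 hcons hN ht
      · by_cases hσ : σ = (fun _ => ⟨0, hN⟩)
        · rw [if_pos hσ] at ht
          simp only [Set.mem_compl_iff, Set.mem_iUnion, not_exists] at ht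
          have hne : ¬ ∃ σ', t ∈ Ival w n σ' := fun ⟨σ', hσ'⟩ => ht σ' hσ'
          rw [addr, dif_neg hne, hσ]
        · rw [if_neg hσ] at ht
          exact absurd ht (Set.notMem_empty t)
  rw [hset]
  refine MeasurableSet.union measurableSet_Ico ?_
  split
  · exact (MeasurableSet.iUnion fun σ' => measurableSet_Ico).compl
  · exact MeasurableSet.empty

lemma addr_init {n : ℕ} {t : ℝ} (ht : t ∈ Set.Ico (0 : ℝ) (w 0 fun i => i.elim0)) :
    Fin.init (addr hN w (n + 1) t) = addr hN w n t := by
  obtain ⟨σ, hσ⟩ := Ival_cover w hw0 hcons (n + 1) t ht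
  rw [addr_eq w hw0 hcons hN hσ]
  have h2 : t ∈ Ival w n (Fin.init σ) := by
    have hsub := Ival_snoc_subset w hw0 hcons n (Fin.init σ) (σ (Fin.last n))
    rw [Fin.snoc_init_self] at hsub
    exact hsub hσ
  rw [addr_eq w hw0 hcons hN h2]

lemma gmap_pi {t : ℝ} (ht : t ∈ Set.Ico (0 : ℝ) (w 0 fun i => i.elim0)) (n : ℕ) :
    (fun i : Fin n => gmap hN w t (i : ℕ)) = addr hN w n t := by
  induction n with
  | zero => exact Subsingleton.elim _ _
  | succ n ih =>
    funext i
    refine Fin.lastCases ?_ ?_ i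
    · rfl
    · intro j
      have h1 : Fin.init (addr hN w (n + 1) t) j = addr hN w n t j :=
        congrFun (addr_init w hw0 hcons hN ht) j
      have h2 : gmap hN w t ((j : Fin n) : ℕ) = addr hN w n t j := congrFun ih j
      show gmap hN w t ((Fin.castSucc j : Fin (n + 1)) : ℕ) = addr hN w (n + 1) t (Fin.castSucc j)
      have h3 : ((Fin.castSucc j : Fin (n + 1)) : ℕ) = (j : ℕ) := rfl
      rw [h3, h2, ← h1]
      rfl

lemma gmap_measurable : Measurable (gmap hN w) :=
  measurable_pi_lambda _ fun m =>
    (measurable_pi_apply (Fin.last m)).comp (addr_measurable w hw0 hcons hN (m + 1))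

end

theorem abstract_path_measure (N : ℕ) (hN : 0 < N) (w : ∀ n, (Fin n → Fin N) → ℝ)
    (hw0 : ∀ n σ, 0 ≤ w n σ)
    (hcons : ∀ n σ, ∑ k : Fin N, w (n + 1) (Fin.snoc σ k) = w n σ) :
    ∃ P : Measure (ℕ → Fin N), ∀ (n : ℕ) (F : (Fin n → Fin N) → ℝ),
      ∫ ω, F (fun i => ω (i : ℕ)) ∂P = ∑ σ : Fin n → Fin N, w n σ * F σ := by
  set H : ℝ := w 0 (fun i => i.elim0) with hHdef
  set s : Set ℝ := Set.Ico (0 : ℝ) H with hsdef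
  refine ⟨(volume.restrict s).map (gmap hN w), ?_⟩
  intro n F
  have hg : Measurable (gmap hN w) := gmap_measurable w hw0 hcons hN
  have hF : Measurable F := fun u _ => (Set.toFinite _).measurableSet
  have hproj : Measurable fun (ω : ℕ → Fin N) (i : Fin n) => ω (i : ℕ) :=
    measurable_pi_lambda _ fun i => measurable_pi_apply _
  have hFm : Measurable fun ω : ℕ → Fin N => F fun i : Fin n => ω (i : ℕ) := hF.comp hproj
  rw [integral_map hg.aemeasurable hFm.aestronglyMeasurable]
  have hIm : ∀ σ : Fin n → Fin N, MeasurableSet (Ival w n σ) := fun σ => measurableSet_Ico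
  have hIvol : ∀ σ : Fin n → Fin N, volume (Ival w n σ) = ENNReal.ofReal (w n σ) := by
    intro σ
    unfold Ival
    rw [Real.volume_Ico, add_sub_cancel_left]
  have hstep : (∫ t in s, F (fun i : Fin n => gmap hN w t (i : ℕ))) =
      ∫ t in s, ∑ σ : Fin n → Fin N, (Ival w n σ).indicator (fun _ => F σ) t := by
    apply setIntegral_congr_fun measurableSet_Ico
    intro t ht
    obtain ⟨σt, hσt⟩ := Ival_cover w hw0 hcons n t ht
    show F (fun i : Fin n => gmap hN w t (i : ℕ)) =
      ∑ σ : Fin n → Fin N, (Ival w n σ).indicator (fun _ => F σ) t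
    rw [gmap_pi w hw0 hcons hN ht n, addr_eq w hw0 hcons hN hσt]
    rw [Finset.sum_eq_single σt]
    · rw [Set.indicator_of_mem hσt]
    · intro σ _ hne
      refine Set.indicator_of_notMem ?_ _
      exact fun hmem =>
        Set.disjoint_left.mp (Ival_disjoint w hw0 hcons n σ σt hne) hmem hσt
    · intro habs
      exact absurd (Finset.mem_univ σt) habs
  rw [hstep]
  have hint : ∀ σ : Fin n → Fin N,
      Integrable ((Ival w n σ).indicator fun _ => F σ) (volume.restrict s) := by
    intro σ
    rw [integrable_indicator_iff (hIm σ)]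
    refine (integrableOn_const_iff (C := F σ)).mpr (Or.inr ?_)
    calc (volume.restrict s) (Ival w n σ) ≤ volume (Ival w n σ) := by
          rw [Measure.restrict_apply (hIm σ)]
          exact measure_mono Set.inter_subset_left
      _ < ⊤ := by rw [hIvol σ]; exact ENNReal.ofReal_lt_top
  rw [integral_finset_sum _ fun σ _ => hint σ]
  refine Finset.sum_congr rfl fun σ _ => ?_
  rw [integral_indicator (hIm σ), setIntegral_const]
  have hres : (volume.restrict s) (Ival w n σ) = ENNReal.ofReal (w n σ) := by
    rw [Measure.restrict_apply (hIm σ),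
      Set.inter_eq_self_of_subset_left (Ival_subset w hw0 hcons n σ), hIvol σ]
  rw [measureReal_def, hres, ENNReal.toReal_ofReal (hw0 n σ), smul_eq_mul]

end PathSpaceAux

/-- Proposition 4.29: given an `N`-to-1 map `r` with measurable inverse branches
`τ₁, …, τ_N` and weights `W, h ≥ 0` with `Σ_k W(τ_k x) h(τ_k x) = h(x)`, there is for every
`x ∈ X` a positive measure `P_x` on `Ω = ∏_ℕ {1,…,N}` such that for every bounded measurable
function depending only on the first `n` coordinates (i.e. of the form `ω ↦ F(ω₁,…,ω_n)`),
`∫ F dP_x = Σ_{ω₁,…,ω_n} W^{(n)}(τ_{ω_n}⋯τ_{ω_1} x) h(τ_{ω_n}⋯τ_{ω_1} x) F(ω₁,…,ω_n)`. -/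
theorem exists_path_space_measure
    (N : ℕ) (X : Type) [MeasurableSpace X]
    (r : X → X) (τ : Fin N → X → X)
    (hτmeas : ∀ k, Measurable (τ k))
    (hrτ : ∀ k x, r (τ k x) = x)
    (hdisj : ∀ k l, k ≠ l → Disjoint (Set.range (τ k)) (Set.range (τ l)))
    (hcover : (⋃ k, Set.range (τ k)) = Set.univ)
    (W h : X → ℝ) (hWmeas : Measurable W) (hhmeas : Measurable h)
    (hW : ∀ x, 0 ≤ W x) (hh : ∀ x, 0 ≤ h x)
    (hWh : ∀ x, ∑ k : Fin N, W (τ k x) * h (τ k x) = h x) :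
    ∀ x : X, ∃ P : Measure (ℕ → Fin N),
      ∀ (n : ℕ) (F : (Fin n → Fin N) → ℝ),
        ∫ ω, F (fun i => ω i) ∂P =
          ∑ σ : Fin n → Fin N,
            (∏ k ∈ Finset.range n, W (r^[k] (chainF τ σ x))) * h (chainF τ σ x) * F σ := by
  intro x
  rcases Nat.eq_zero_or_pos N with hN0 | hN
  · subst hN0
    refine ⟨0, ?_⟩
    intro n F
    have hh0 : ∀ y, h y = 0 := fun y => by
      have := hWh y
      simpa using this.symm
    simp [hh0]
  · set w : ∀ n, (Fin n → Fin N) → ℝ :=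
      fun n σ => (∏ k ∈ Finset.range n, W (r^[k] (chainF τ σ x))) * h (chainF τ σ x) with hwdef
    have hw0 : ∀ n σ, 0 ≤ w n σ := fun n σ =>
      mul_nonneg (Finset.prod_nonneg fun k _ => hW _) (hh _)
    have hcons : ∀ n σ, ∑ k : Fin N, w (n + 1) (Fin.snoc σ k) = w n σ := by
      intro n σ
      set y : X := chainF τ σ x with hydef
      have hstep : ∀ k : Fin N, w (n + 1) (Fin.snoc σ k) =
          (∏ j ∈ Finset.range n, W (r^[j] y)) * (W (τ k y) * h (τ k y)) := by
        intro k
        have hc : chainF τ (Fin.snoc σ k) x = τ k y := chainF_snoc τ σ k x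
        have hiter : ∀ j : ℕ, r^[j + 1] (τ k y) = r^[j] y := fun j => by
          rw [Function.iterate_succ_apply, hrτ]
        simp only [hwdef, hc]
        rw [Finset.prod_range_succ' fun j => W (r^[j] (τ k y))]
        simp only [hiter, Function.iterate_zero_apply]
        ring
      rw [Finset.sum_congr rfl fun k _ => hstep k, ← Finset.mul_sum, hWh y]
    obtain ⟨P, hP⟩ := PathSpaceAux.abstract_path_measure N hN w hw0 hcons
    refine ⟨P, fun n F => ?_⟩
    rw [hP n F]
end

section
/- Let (X,𝔅) be a measurable space and r : X → X measurable, onto and finite-to-one. Let D : X → [0,∞) be a measurable function with Σ_{y : r(y)=x} D(y) = 1 for all x ∈ X, and set D^{(n)} := D·(D∘r)⋯(D∘r^{n-1}) for n ∈ ℕ, D^{(0)} := 1. Then for each x₀ ∈ X there exists a Borel probability measure P_{x₀} on the fiber path space Ω_{x₀} := {(x₁,x₂,…) ∈ X^ℕ : r(x₁) = x₀ and r(x_{n+1}) = x_n for all n ≥ 1} such that for every n and every bounded measurable function f on Ω_{x₀} depending only on the first n coordinates x₁,…,x_n, one has ∫_{Ω_{x₀}} f dP_{x₀} = Σ_{x_n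 : rⁿ(x_n) = x₀} D^{(n)}(x_n) · f(x₁,…,x_n), where x_k = r^{n-k}(x_n) for 1 ≤ k ≤ n. -/
open MeasureTheory
open scoped ENNReal

/-- The fiber path space `Ω_{x₀}`: infinite backward orbits starting at `x₀`. -/
def Omega {X : Type} (r : X → X) (x₀ : X) : Set (ℕ → X) :=
  {ω | r (ω 0) = x₀ ∧ ∀ n, r (ω (n + 1)) = ω n}

set_option linter.unusedSectionVars false
set_option linter.unusedVariables false

open Finset

section Cover
variable {α : Type*} [LinearOrder α]

lemma cover_sum_le {s : Finset α} {w : α → ℝ} (hw : ∀ y, 0 ≤ w y)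
    {y y' : α} (hy : y ∈ s) (h : y < y') :
    (∑ z ∈ s.filter (· < y), w z) + w y ≤ ∑ z ∈ s.filter (· < y'), w z := by
  have hins : s.filter (· ≤ y) = insert y (s.filter (· < y)) := by
    ext z
    simp only [mem_filter, mem_insert]
    constructor
    · rintro ⟨hz, hle⟩
      rcases lt_or_eq_of_le hle with h' | h'
      · exact Or.inr ⟨hz, h'⟩
      · exact Or.inl h'
    · rintro (rfl | ⟨hz, hlt⟩)
      · exact ⟨hy, le_refl _⟩
      · exact ⟨hz, le_of_lt hlt⟩
  have h1 : (∑ z ∈ s.filter (· < y), w z) + w y = ∑ z ∈ s.filter (· ≤ y), w z := by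
    rw [hins, Finset.sum_insert (by simp)]
    ring
  rw [h1]
  apply Finset.sum_le_sum_of_subset_of_nonneg
  · intro z hz
    simp only [mem_filter] at hz ⊢
    exact ⟨hz.1, lt_of_le_of_lt hz.2 h⟩
  · intro i _ _; exact hw i

lemma cover_exists {s : Finset α} {w : α → ℝ} (hw : ∀ y, 0 ≤ w y) {t : ℝ}
    (h0 : 0 ≤ t) (h1 : t < ∑ y ∈ s, w y) :
    ∃ y ∈ s, (∑ z ∈ s.filter (· < y), w z) ≤ t ∧
      t < (∑ z ∈ s.filter (· < y), w z) + w y := by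
  classical
  have hne : s.Nonempty := by
    rcases s.eq_empty_or_nonempty with rfl | h
    · simp at h1; linarith
    · exact h
  set T : α → ℝ := fun y => ∑ z ∈ s.filter (· ≤ y), w z with hT
  have hTins : ∀ y ∈ s, T y = (∑ z ∈ s.filter (· < y), w z) + w y := by
    intro y hy
    have hins : s.filter (· ≤ y) = insert y (s.filter (· < y)) := by
      ext z
      simp only [mem_filter, mem_insert]
      constructor
      · rintro ⟨hz, hle⟩
        rcases lt_or_eq_of_le hle with h' | h'
        · exact Or.inr ⟨hz, h'⟩
        · exact Or.inl h'
      · rintro (rfl | ⟨hz, hlt⟩)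
        · exact ⟨hy, le_refl _⟩
        · exact ⟨hz, le_of_lt hlt⟩
    rw [hT]
    simp only
    rw [hins, Finset.sum_insert (by simp)]
    ring
  set s' := s.filter (fun y => t < T y) with hs'
  have hMs' : s.max' hne ∈ s' := by
    rw [hs', mem_filter]
    refine ⟨s.max'_mem hne, ?_⟩
    have : s.filter (· ≤ s.max' hne) = s := by
      apply Finset.filter_true_of_mem
      intro z hz; exact s.le_max' z hz
    rw [hT]; simp only; rw [this]; exact h1
  have hs'ne : s'.Nonempty := ⟨_, hMs'⟩
  set y := s'.min' hs'ne with hy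
  have hys' : y ∈ s' := s'.min'_mem hs'ne
  have hys : y ∈ s := (mem_filter.1 hys').1
  have hty : t < T y := by
    have := (mem_filter.1 hys').2
    simpa using this
  refine ⟨y, hys, ?_, ?_⟩
  · by_contra hcon
    push_neg at hcon
    have hfne : (s.filter (· < y)).Nonempty := by
      rcases (s.filter (· < y)).eq_empty_or_nonempty with he | h
      · rw [he] at hcon; simp at hcon; linarith
      · exact h
    set u := (s.filter (· < y)).max' hfne with hu
    have hus : u ∈ s.filter (· < y) := (s.filter (· < y)).max'_mem hfne
    have huy : u < y := (mem_filter.1 hus).2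
    have hTu : T u = ∑ z ∈ s.filter (· < y), w z := by
      rw [hT]; simp only
      congr 1
      ext z
      simp only [mem_filter]
      constructor
      · rintro ⟨hz, hle⟩
        exact ⟨hz, lt_of_le_of_lt hle huy⟩
      · rintro ⟨hz, hlt⟩
        exact ⟨hz, (s.filter (· < y)).le_max' z (mem_filter.2 ⟨hz, hlt⟩)⟩
    have hus' : u ∈ s' := by
      rw [hs', mem_filter]
      exact ⟨(mem_filter.1 hus).1, by rw [hTu]; exact hcon⟩
    have := s'.min'_le u hus'
    rw [← hy] at this
    exact absurd (lt_of_le_of_lt this huy) (lt_irrefl y)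
  · rw [hTins y hys] at hty; exact hty

end Cover

section Main
variable {X : Type} [LinearOrder X] (r : X → X) (D : X → ℝ) (x₀ : X)

lemma finite_iter_fiber (hfin : ∀ x, (r ⁻¹' {x}).Finite) (n : ℕ) :
    ∀ x : X, ((r^[n]) ⁻¹' {x}).Finite := by
  induction n with
  | zero =>
    intro x
    have : (r^[0]) ⁻¹' {x} = {x} := by ext y; simp
    rw [this]; exact Set.finite_singleton x
  | succ n ih =>
    intro x
    have : (r^[n+1]) ⁻¹' {x} = ⋃ z ∈ (r^[n]) ⁻¹' {x}, r ⁻¹' {z} := by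
      ext y
      simp [Function.iterate_succ_apply]
    rw [this]
    exact Set.Finite.biUnion (ih x) (fun z _ => hfin z)

/-- weight of an `(n+1)`-step backward path ending at `y`. -/
noncomputable def wgt (n : ℕ) (y : X) : ℝ := ∏ k ∈ Finset.range (n+1), D (r^[k] y)

/-- the finset of points `y` with `r^[n+1] y = x₀`. -/
noncomputable def Fb (hfin : ∀ x, (r ⁻¹' {x}).Finite) (n : ℕ) : Finset X :=
  (finite_iter_fiber r hfin (n+1) x₀).toFinset

/-- children of `z`. -/
noncomputable def chl (hfin : ∀ x, (r ⁻¹' {x}).Finite) (z : X) : Finset X :=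
  (hfin z).toFinset

variable (hfin : ∀ x, (r ⁻¹' {x}).Finite)

lemma mem_Fb {n : ℕ} {y : X} : y ∈ Fb r x₀ hfin n ↔ r^[n+1] y = x₀ := by
  simp [Fb, Set.Finite.mem_toFinset]

lemma mem_chl {z y : X} : y ∈ chl r hfin z ↔ r y = z := by
  simp [chl, Set.Finite.mem_toFinset]

lemma self_mem_chl (y : X) : y ∈ chl r hfin (r y) := (mem_chl r hfin).2 rfl

lemma Fb_succ_mem {n : ℕ} {y : X} (hy : y ∈ Fb r x₀ hfin (n+1)) :
    r y ∈ Fb r x₀ hfin n := by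
  rw [mem_Fb] at hy ⊢
  rw [← Function.iterate_succ_apply]
  exact hy

lemma chl_mem_Fb {n : ℕ} {z y : X} (hz : z ∈ Fb r x₀ hfin n) (hy : y ∈ chl r hfin z) :
    y ∈ Fb r x₀ hfin (n+1) := by
  rw [mem_Fb] at hz ⊢
  rw [mem_chl] at hy
  rw [Function.iterate_succ_apply, hy]
  exact hz

lemma wgt_nonneg (hDpos : ∀ x, 0 ≤ D x) (n : ℕ) (y : X) : 0 ≤ wgt r D n y :=
  Finset.prod_nonneg (fun _ _ => hDpos _)

lemma wgt_succ (n : ℕ) (y : X) : wgt r D (n+1) y = D y * wgt r D n (r y) := by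
  rw [wgt, Finset.prod_range_succ']
  simp only [Function.iterate_succ_apply, Function.iterate_zero, id_eq]
  rw [mul_comm]
  rfl

/-- address of `y` at level `n`. -/
noncomputable def addr (hfin : ∀ x, (r ⁻¹' {x}).Finite) : ℕ → X → ℝ
  | 0, y => ∑ z ∈ (Fb r x₀ hfin 0).filter (· < y), wgt r D 0 z
  | (n+1), y =>
      addr hfin n (r y) + ∑ z ∈ (chl r hfin (r y)).filter (· < y), wgt r D (n+1) z

end Main


section Main2
variable {X : Type} [LinearOrder X] (r : X → X) (D : X → ℝ) (x₀ : X)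
  (hfin : ∀ x, (r ⁻¹' {x}).Finite)

lemma sum_chl_D (hDsum : ∀ x, (∑' y : r ⁻¹' {x}, D y) = 1) (z : X) :
    ∑ y ∈ chl r hfin z, D y = 1 := by
  haveI : Fintype (r ⁻¹' {z} : Set X) := (hfin z).fintype
  have h1 := hDsum z
  rw [tsum_fintype] at h1
  rw [← h1]
  exact Finset.sum_subtype _ (fun y => mem_chl r hfin) D

lemma wgt_zero (y : X) : wgt r D 0 y = D y := by
  rw [wgt, Finset.prod_range_one]
  simp

lemma Fb_zero : Fb r x₀ hfin 0 = chl r hfin x₀ := by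
  ext y
  rw [mem_Fb, mem_chl]
  simp

lemma sum_Fb_zero (hDsum : ∀ x, (∑' y : r ⁻¹' {x}, D y) = 1) :
    ∑ y ∈ Fb r x₀ hfin 0, wgt r D 0 y = 1 := by
  rw [Fb_zero]
  rw [Finset.sum_congr rfl (fun y _ => wgt_zero r D y)]
  exact sum_chl_D r D hfin hDsum x₀

lemma sum_chl_wgt (hDsum : ∀ x, (∑' y : r ⁻¹' {x}, D y) = 1) (n : ℕ) (z : X) :
    ∑ y ∈ chl r hfin z, wgt r D (n+1) y = wgt r D n z := by
  have : ∀ y ∈ chl r hfin z, wgt r D (n+1) y = D y * wgt r D n z := by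
    intro y hy
    rw [wgt_succ, (mem_chl r hfin).1 hy]
  rw [Finset.sum_congr rfl this, ← Finset.sum_mul, sum_chl_D r D hfin hDsum z, one_mul]


/-- nesting: the interval of `y` at level `n+1` is inside the interval of `r y` at level `n`. -/
lemma addr_nest (hDpos : ∀ x, 0 ≤ D x) (hDsum : ∀ x, (∑' y : r ⁻¹' {x}, D y) = 1) (n : ℕ) (y : X) :
    addr r D x₀ hfin n (r y) ≤ addr r D x₀ hfin (n+1) y ∧
    addr r D x₀ hfin (n+1) y + wgt r D (n+1) y ≤
      addr r D x₀ hfin n (r y) + wgt r D n (r y) := by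
  constructor
  · show addr r D x₀ hfin n (r y) ≤ addr r D x₀ hfin n (r y) + _
    have : (0:ℝ) ≤ ∑ z ∈ (chl r hfin (r y)).filter (· < y), wgt r D (n+1) z :=
      Finset.sum_nonneg (fun z _ => wgt_nonneg r D hDpos _ z)
    linarith
  · show addr r D x₀ hfin n (r y) + _ + _ ≤ _
    have hy : y ∈ chl r hfin (r y) := self_mem_chl r hfin y
    have h2 : (∑ z ∈ (chl r hfin (r y)).filter (· < y), wgt r D (n+1) z) + wgt r D (n+1) y
        ≤ ∑ z ∈ chl r hfin (r y), wgt r D (n+1) z := by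
      have hins : (chl r hfin (r y)).filter (· ≤ y) = insert y ((chl r hfin (r y)).filter (· < y)) := by
        ext z
        simp only [mem_filter, mem_insert]
        constructor
        · rintro ⟨hz, hle⟩
          rcases lt_or_eq_of_le hle with h' | h'
          · exact Or.inr ⟨hz, h'⟩
          · exact Or.inl h'
        · rintro (rfl | ⟨hz, hlt⟩)
          · exact ⟨hy, le_refl _⟩
          · exact ⟨hz, le_of_lt hlt⟩
      have : (∑ z ∈ (chl r hfin (r y)).filter (· < y), wgt r D (n+1) z) + wgt r D (n+1) y
          = ∑ z ∈ (chl r hfin (r y)).filter (· ≤ y), wgt r D (n+1) z := by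
        rw [hins, Finset.sum_insert (by simp)]; ring
      rw [this]
      apply Finset.sum_le_sum_of_subset_of_nonneg (Finset.filter_subset _ _)
      intro i _ _; exact wgt_nonneg r D hDpos _ i
    rw [sum_chl_wgt r D hfin hDsum n (r y)] at h2
    linarith

/-- intervals of distinct points at the same level are disjoint (ordered form). -/
lemma addr_disj (hDpos : ∀ x, 0 ≤ D x) (hDsum : ∀ x, (∑' y : r ⁻¹' {x}, D y) = 1) : ∀ n : ℕ, ∀ y ∈ Fb r x₀ hfin n, ∀ y' ∈ Fb r x₀ hfin n, y ≠ y' →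
    addr r D x₀ hfin n y + wgt r D n y ≤ addr r D x₀ hfin n y' ∨
    addr r D x₀ hfin n y' + wgt r D n y' ≤ addr r D x₀ hfin n y := by
  intro n
  induction n with
  | zero =>
    intro y hy y' hy' hne
    rcases lt_or_gt_of_ne hne with h | h
    · exact Or.inl (cover_sum_le (fun z => wgt_nonneg r D hDpos 0 z) hy h)
    · exact Or.inr (cover_sum_le (fun z => wgt_nonneg r D hDpos 0 z) hy' h)
  | succ n ih =>
    intro y hy y' hy' hne
    by_cases hpar : r y = r y'
    · -- siblings
      rcases lt_or_gt_of_ne hne with h | h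
      · left
        have := cover_sum_le (s := chl r hfin (r y)) (fun z => wgt_nonneg r D hDpos (n+1) z)
          (self_mem_chl r hfin y) h
        show addr r D x₀ hfin n (r y) + _ + _ ≤ addr r D x₀ hfin n (r y') + _
        rw [← hpar]
        have h2 : (chl r hfin (r y)).filter (· < y') = (chl r hfin (r y')).filter (· < y') := by
          rw [hpar]
        rw [← h2] at *
        linarith
      · right
        have := cover_sum_le (s := chl r hfin (r y')) (fun z => wgt_nonneg r D hDpos (n+1) z)
          (self_mem_chl r hfin y') h
        show addr r D x₀ hfin n (r y') + _ + _ ≤ addr r D x₀ hfin n (r y) + _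
        rw [hpar]
        have h2 : (chl r hfin (r y')).filter (· < y) = (chl r hfin (r y)).filter (· < y) := by
          rw [hpar]
        rw [← h2] at *
        linarith
    · have h1 := addr_nest r D x₀ hfin hDpos hDsum n y
      have h2 := addr_nest r D x₀ hfin hDpos hDsum n y'
      rcases ih (r y) (Fb_succ_mem r x₀ hfin hy) (r y') (Fb_succ_mem r x₀ hfin hy') hpar with h | h
      · left; linarith
      · right; linarith

/-- each level-`n` interval of a fiber point lies in `[0,1)`-closure bounds. -/
lemma addr_bound (hDpos : ∀ x, 0 ≤ D x) (hDsum : ∀ x, (∑' y : r ⁻¹' {x}, D y) = 1) : ∀ n : ℕ, ∀ y ∈ Fb r x₀ hfin n,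
    0 ≤ addr r D x₀ hfin n y ∧ addr r D x₀ hfin n y + wgt r D n y ≤ 1 := by
  intro n
  induction n with
  | zero =>
    intro y hy
    constructor
    · exact Finset.sum_nonneg (fun z _ => wgt_nonneg r D hDpos 0 z)
    · have hins : (Fb r x₀ hfin 0).filter (· ≤ y) = insert y ((Fb r x₀ hfin 0).filter (· < y)) := by
        ext z
        simp only [mem_filter, mem_insert]
        constructor
        · rintro ⟨hz, hle⟩
          rcases lt_or_eq_of_le hle with h' | h'
          · exact Or.inr ⟨hz, h'⟩
          · exact Or.inl h'
        · rintro (rfl | ⟨hz, hlt⟩)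
          · exact ⟨hy, le_refl _⟩
          · exact ⟨hz, le_of_lt hlt⟩
      have heq : addr r D x₀ hfin 0 y + wgt r D 0 y
          = ∑ z ∈ (Fb r x₀ hfin 0).filter (· ≤ y), wgt r D 0 z := by
        show (∑ z ∈ (Fb r x₀ hfin 0).filter (· < y), wgt r D 0 z) + _ = _
        rw [hins, Finset.sum_insert (by simp)]; ring
      rw [heq]
      calc ∑ z ∈ (Fb r x₀ hfin 0).filter (· ≤ y), wgt r D 0 z
          ≤ ∑ z ∈ Fb r x₀ hfin 0, wgt r D 0 z :=
            Finset.sum_le_sum_of_subset_of_nonneg (Finset.filter_subset _ _)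
              (fun i _ _ => wgt_nonneg r D hDpos 0 i)
        _ = 1 := sum_Fb_zero r D x₀ hfin hDsum
  | succ n ih =>
    intro y hy
    have h1 := addr_nest r D x₀ hfin hDpos hDsum n y
    have h2 := ih (r y) (Fb_succ_mem r x₀ hfin hy)
    constructor
    · linarith
    · have := wgt_nonneg r D hDpos (n+1) y
      linarith

/-- existence: every `t ∈ [0,1)` lies in some level-`n` interval. -/
lemma addr_exists (hDpos : ∀ x, 0 ≤ D x) (hDsum : ∀ x, (∑' y : r ⁻¹' {x}, D y) = 1) : ∀ n : ℕ, ∀ t : ℝ, 0 ≤ t → t < 1 →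
    ∃ y ∈ Fb r x₀ hfin n, addr r D x₀ hfin n y ≤ t ∧
      t < addr r D x₀ hfin n y + wgt r D n y := by
  intro n
  induction n with
  | zero =>
    intro t h0 h1
    have := cover_exists (s := Fb r x₀ hfin 0) (w := wgt r D 0)
      (fun z => wgt_nonneg r D hDpos 0 z) h0
      (by rw [sum_Fb_zero r D x₀ hfin hDsum]; exact h1)
    exact this
  | succ n ih =>
    intro t h0 h1
    obtain ⟨z, hz, hz1, hz2⟩ := ih t h0 h1
    have hsum : ∑ y ∈ chl r hfin z, wgt r D (n+1) y = wgt r D n z :=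
      sum_chl_wgt r D hfin hDsum n z
    obtain ⟨y, hy, hy1, hy2⟩ := cover_exists (s := chl r hfin z) (w := wgt r D (n+1))
      (fun w => wgt_nonneg r D hDpos (n+1) w)
      (t := t - addr r D x₀ hfin n z) (by linarith) (by rw [hsum]; linarith)
    have hry : r y = z := (mem_chl r hfin).1 hy
    refine ⟨y, chl_mem_Fb r x₀ hfin hz hy, ?_, ?_⟩
    · show addr r D x₀ hfin n (r y) + _ ≤ t
      rw [hry]
      linarith
    · show t < addr r D x₀ hfin n (r y) + _ + _
      rw [hry]
      linarith

end Main2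
section Main3
variable {X : Type} [LinearOrder X] (r : X → X) (D : X → ℝ) (x₀ : X)
  (hfin : ∀ x, (r ⁻¹' {x}).Finite)
  (hDpos : ∀ x, 0 ≤ D x) (hDsum : ∀ x, (∑' y : r ⁻¹' {x}, D y) = 1)

/-- clamp to `[0,1)`. -/
noncomputable def clamp (t : ℝ) : ℝ := if 0 ≤ t ∧ t < 1 then t else 0

lemma clamp_mem (t : ℝ) : 0 ≤ clamp t ∧ clamp t < 1 := by
  rw [clamp]
  split
  · assumption
  · norm_num

lemma clamp_measurable : Measurable clamp := by
  apply Measurable.ite _ measurable_id measurable_const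
  have : {a : ℝ | 0 ≤ a ∧ a < 1} = Set.Ico 0 1 := rfl
  rw [this]
  exact measurableSet_Ico

lemma clamp_eq_of_mem {t : ℝ} (h : t ∈ Set.Ico (0:ℝ) 1) : clamp t = t :=
  if_pos ⟨h.1, h.2⟩

/-- the point of `Fb n` whose interval contains `t`. -/
noncomputable def pick (t : ℝ) (n : ℕ) : X :=
  if h : 0 ≤ t ∧ t < 1 then
    (addr_exists r D x₀ hfin hDpos hDsum n t h.1 h.2).choose
  else x₀

lemma pick_spec (t : ℝ) (h0 : 0 ≤ t) (h1 : t < 1) (n : ℕ) :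
    pick r D x₀ hfin hDpos hDsum t n ∈ Fb r x₀ hfin n ∧
    addr r D x₀ hfin n (pick r D x₀ hfin hDpos hDsum t n) ≤ t ∧
    t < addr r D x₀ hfin n (pick r D x₀ hfin hDpos hDsum t n) +
      wgt r D n (pick r D x₀ hfin hDpos hDsum t n) := by
  rw [pick, dif_pos ⟨h0, h1⟩]
  exact (addr_exists r D x₀ hfin hDpos hDsum n t h0 h1).choose_spec

lemma pick_unique {t : ℝ} (h0 : 0 ≤ t) (h1 : t < 1) {n : ℕ} {y : X}
    (hy : y ∈ Fb r x₀ hfin n) (ha : addr r D x₀ hfin n y ≤ t)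
    (hb : t < addr r D x₀ hfin n y + wgt r D n y) :
    pick r D x₀ hfin hDpos hDsum t n = y := by
  obtain ⟨hm, h2, h3⟩ := pick_spec r D x₀ hfin hDpos hDsum t h0 h1 n
  by_contra hne
  rcases addr_disj r D x₀ hfin hDpos hDsum n _ hm y hy hne with h | h
  · linarith
  · linarith

lemma pick_chain (t : ℝ) (h0 : 0 ≤ t) (h1 : t < 1) (n : ℕ) :
    r (pick r D x₀ hfin hDpos hDsum t (n+1)) = pick r D x₀ hfin hDpos hDsum t n := by
  obtain ⟨hm, h2, h3⟩ := pick_spec r D x₀ hfin hDpos hDsum t h0 h1 (n+1)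
  have hnest := addr_nest r D x₀ hfin hDpos hDsum n (pick r D x₀ hfin hDpos hDsum t (n+1))
  exact (pick_unique r D x₀ hfin hDpos hDsum h0 h1 (Fb_succ_mem r x₀ hfin hm)
    (by linarith) (by linarith)).symm

lemma pick_zero (t : ℝ) (h0 : 0 ≤ t) (h1 : t < 1) :
    r (pick r D x₀ hfin hDpos hDsum t 0) = x₀ := by
  have hm := (pick_spec r D x₀ hfin hDpos hDsum t h0 h1 0).1
  rw [mem_Fb] at hm
  rwa [Function.iterate_one] at hm

lemma pick_meas [MeasurableSpace X] (n : ℕ) :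
    Measurable (fun t => pick r D x₀ hfin hDpos hDsum (clamp t) n) := by
  intro S hS
  have hset : (fun t => pick r D x₀ hfin hDpos hDsum (clamp t) n) ⁻¹' S =
      ⋃ y ∈ ((Fb r x₀ hfin n : Set X) ∩ S),
        clamp ⁻¹' (Set.Ico (addr r D x₀ hfin n y)
          (addr r D x₀ hfin n y + wgt r D n y)) := by
    ext t
    obtain ⟨hc0, hc1⟩ := clamp_mem t
    simp only [Set.mem_preimage, Set.mem_iUnion, Set.mem_inter_iff, Finset.mem_coe,
      Set.mem_Ico, exists_prop]
    constructor
    · intro ht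
      obtain ⟨hm, h2, h3⟩ := pick_spec r D x₀ hfin hDpos hDsum (clamp t) hc0 hc1 n
      exact ⟨pick r D x₀ hfin hDpos hDsum (clamp t) n, ⟨hm, ht⟩, h2, h3⟩
    · rintro ⟨y, ⟨hyF, hyS⟩, hya, hyb⟩
      rw [pick_unique r D x₀ hfin hDpos hDsum hc0 hc1 hyF hya hyb]
      exact hyS
  rw [hset]
  exact MeasurableSet.biUnion
    (Set.Finite.countable ((Fb r x₀ hfin n).finite_toSet.inter_of_left S))
    (fun y _ => clamp_measurable measurableSet_Ico)

end Main3
/-- Proposition 5.20: if `D ≥ 0` satisfies `Σ_{r(y)=x} D(y) = 1` for all `x`, then for each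
`x₀` there is a Borel probability measure `P_{x₀}` on `Ω_{x₀}` such that for every bounded
measurable function depending only on the first `n` coordinates (equivalently, of the form
`ω ↦ F(ω_{n-1})`, since the first `n` coordinates are determined by the `n`-th one),
`∫ f dP_{x₀} = Σ_{rⁿ(x_n)=x₀} D^{(n)}(x_n) f(x₁,…,x_n)`. -/
theorem exists_markov_fiber_measure
    (X : Type) [MeasurableSpace X] (r : X → X) (hr : Measurable r)
    (hsur : Function.Surjective r) (hfin : ∀ x, (r ⁻¹' {x}).Finite)
    (D : X → ℝ) (hD : Measurable D) (hDpos : ∀ x, 0 ≤ D x)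
    (hDsum : ∀ x, (∑' y : r ⁻¹' {x}, D y) = 1) :
    ∀ x₀ : X, ∃ P : Measure (Omega r x₀), IsProbabilityMeasure P ∧
      ∀ (n : ℕ) (F : X → ℝ), Measurable F → (∃ C, ∀ x, |F x| ≤ C) →
        ∫ ω, F ((ω : ℕ → X) n) ∂P =
          ∑' y : (r^[n + 1]) ⁻¹' {x₀},
            (∏ k ∈ Finset.range (n + 1), D (r^[k] y)) * F y := by
  intro x₀
  letI : LinearOrder X := IsWellOrder.linearOrder WellOrderingRel
  set μ : Measure ℝ := volume.restrict (Set.Ico (0:ℝ) 1) with hμ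
  haveI : IsProbabilityMeasure μ := by
    constructor
    rw [hμ, Measure.restrict_apply_univ, Real.volume_Ico]
    norm_num
  have hGpath : ∀ t : ℝ,
      (fun n => pick r D x₀ hfin hDpos hDsum (clamp t) n) ∈ Omega r x₀ := by
    intro t
    obtain ⟨hc0, hc1⟩ := clamp_mem t
    exact ⟨pick_zero r D x₀ hfin hDpos hDsum (clamp t) hc0 hc1,
      fun n => pick_chain r D x₀ hfin hDpos hDsum (clamp t) hc0 hc1 n⟩
  set G : ℝ → Omega r x₀ := fun t => ⟨fun n => pick r D x₀ hfin hDpos hDsum (clamp t) n,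
    hGpath t⟩ with hG
  have hGm : Measurable G :=
    Measurable.subtype_mk (measurable_pi_lambda _
      (fun n => pick_meas r D x₀ hfin hDpos hDsum n))
  refine ⟨Measure.map G μ, Measure.isProbabilityMeasure_map hGm.aemeasurable, ?_⟩
  intro n F hF _
  -- rewrite the tsum as a finite sum over `Fb n`
  haveI : Fintype ((r^[n+1]) ⁻¹' {x₀} : Set X) := (finite_iter_fiber r hfin (n+1) x₀).fintype
  have hmem : ∀ y : X, y ∈ Fb r x₀ hfin n ↔ y ∈ (r^[n+1]) ⁻¹' {x₀} := by
    intro y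
    rw [mem_Fb]
    simp [Set.mem_preimage]
  have hsum_eq : (∑' y : ((r^[n+1]) ⁻¹' {x₀} : Set X),
      (∏ k ∈ Finset.range (n + 1), D (r^[k] (y : X))) * F y)
      = ∑ y ∈ Fb r x₀ hfin n, wgt r D n y * F y := by
    rw [tsum_fintype]
    exact (Finset.sum_subtype _ hmem (fun y => wgt r D n y * F y)).symm
  rw [hsum_eq]
  have hmeas : Measurable fun ω : Omega r x₀ => F ((ω : ℕ → X) n) :=
    hF.comp ((measurable_pi_apply n).comp measurable_subtype_coe)
  rw [integral_map hGm.aemeasurable hmeas.aestronglyMeasurable]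
  have key : ∀ t ∈ Set.Ico (0:ℝ) 1,
      F ((G t : ℕ → X) n) =
      ∑ y ∈ Fb r x₀ hfin n,
        Set.indicator (Set.Ico (addr r D x₀ hfin n y)
          (addr r D x₀ hfin n y + wgt r D n y)) (fun _ => F y) t := by
    intro t ht
    have hct : clamp t = t := clamp_eq_of_mem ht
    obtain ⟨hm, h2, h3⟩ := pick_spec r D x₀ hfin hDpos hDsum t ht.1 ht.2 n
    set z := pick r D x₀ hfin hDpos hDsum t n with hz
    have hterm : ∀ y ∈ Fb r x₀ hfin n,
        Set.indicator (Set.Ico (addr r D x₀ hfin n y)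
          (addr r D x₀ hfin n y + wgt r D n y)) (fun _ => F y) t
        = if y = z then F y else 0 := by
      intro y hy
      by_cases hyz : y = z
      · subst hyz
        have hmem2 : t ∈ Set.Ico (addr r D x₀ hfin n z)
            (addr r D x₀ hfin n z + wgt r D n z) := ⟨h2, h3⟩
        rw [Set.indicator_of_mem hmem2, if_pos rfl]
      · rw [if_neg hyz, Set.indicator_of_notMem]
        intro hmem'
        exact hyz (pick_unique r D x₀ hfin hDpos hDsum ht.1 ht.2 hy hmem'.1 hmem'.2).symm
    rw [Finset.sum_congr rfl hterm, Finset.sum_ite_eq' _ z F, if_pos hm]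
    show F (pick r D x₀ hfin hDpos hDsum (clamp t) n) = F z
    rw [hct]
  rw [hμ]
  rw [MeasureTheory.setIntegral_congr_fun measurableSet_Ico key]
  rw [MeasureTheory.integral_finset_sum]
  · apply Finset.sum_congr rfl
    intro y hy
    have hbnd := addr_bound r D x₀ hfin hDpos hDsum n y hy
    have hsub : Set.Ico (addr r D x₀ hfin n y) (addr r D x₀ hfin n y + wgt r D n y)
        ⊆ Set.Ico (0:ℝ) 1 := by
      intro u hu
      exact ⟨le_trans hbnd.1 hu.1, lt_of_lt_of_le hu.2 hbnd.2⟩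
    rw [MeasureTheory.integral_indicator_const (F y) measurableSet_Ico]
    rw [measureReal_def, Measure.restrict_apply measurableSet_Ico,
      Set.inter_eq_self_of_subset_left hsub, Real.volume_Ico]
    have : addr r D x₀ hfin n y + wgt r D n y - addr r D x₀ hfin n y = wgt r D n y := by ring
    rw [this, ENNReal.toReal_ofReal (wgt_nonneg r D hDpos n y), smul_eq_mul]
  · intro y hy
    rw [MeasureTheory.integrable_indicator_iff measurableSet_Ico]
    exact integrableOn_const (measure_ne_top _ _)
end
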